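/- For every 312-avoiding permutation π of length n, foze''(π) = Σ_{i ∈ Lmax(π)} (π_i - i), where foze''(π) is the number of occurrences of the vincular pattern [23]-1 plus the number of descents of π. -/

import Mathlib

open scoped Classical

namespace ThesisStmt
noncomputable section

variable {n : ℕ}

/-- π avoids the classical pattern 231: no i<j<k with π k < π i < π j. -/
def Avoids231 (π : Equiv.Perm (Fin n)) : Prop :=
  ¬ ∃ i j k : Fin n, i < j ∧ j < k ∧ π k < π i ∧ π i < π j

/-- π avoids 312: no i<j<k with π j < π k < π i. -/
def Avoids312 (π : Equiv.Perm (Fin n)) : Prop :=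
  ¬ ∃ i j k : Fin n, i < j ∧ j < k ∧ π j < π k ∧ π k < π i

/-- π avoids 321: no i<j<k with π k < π j < π i. -/
def Avoids321 (π : Equiv.Perm (Fin n)) : Prop :=
  ¬ ∃ i j k : Fin n, i < j ∧ j < k ∧ π k < π j ∧ π j < π i

/-- A nonempty set of positions whose values, read in increasing position order,
form consecutive integers decreasing by 1 (values strictly decrease along positions
and the value set is an integer interval). -/
def IsDecSeq (π : Equiv.Perm (Fin n)) (I : Finset (Fin n)) : Prop :=
  I.Nonempty ∧ (∀ i ∈ I, ∀ j ∈ I, i < j → π j < π i) ∧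
    ∀ v : Fin n, (∃ a ∈ I, π a ≤ v) → (∃ b ∈ I, v ≤ π b) → ∃ c ∈ I, π c = v

/-- An inverse descent run: a maximal `IsDecSeq`. -/
def IsIDR (π : Equiv.Perm (Fin n)) (I : Finset (Fin n)) : Prop :=
  IsDecSeq π I ∧ ∀ J : Finset (Fin n), IsDecSeq π J → I ⊆ J → J = I

/-- `I 0, I 1, ..., I (k-1)` is the family of inverse descent runs of π,
partitioning the positions, ordered by decreasing maximum value. -/
def IDRFamily (π : Equiv.Perm (Fin n)) {k : ℕ} (I : Fin k → Finset (Fin n)) : Prop :=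
  (∀ j, IsIDR π (I j)) ∧ (∀ x : Fin n, ∃! j, x ∈ I j) ∧
    ∀ u v : Fin k, u < v → ∃ a ∈ I u, ∀ b ∈ I v, π b < π a

/-- position i is a left-to-right maximum. -/
def IsLmax (π : Equiv.Perm (Fin n)) (i : Fin n) : Prop := ∀ j, j < i → π j < π i

/-- position i is a right-to-left maximum. -/
def IsRmax (π : Equiv.Perm (Fin n)) (i : Fin n) : Prop := ∀ j, i < j → π j < π i

/-- position i is a right-to-left minimum. -/
def IsRmin (π : Equiv.Perm (Fin n)) (i : Fin n) : Prop := ∀ j, i < j → π i < π j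

def LmaxSet (π : Equiv.Perm (Fin n)) : Finset (Fin n) := Finset.univ.filter (IsLmax π)

def rmaxCount (π : Equiv.Perm (Fin n)) : ℕ := (Finset.univ.filter (IsRmax π)).card

def rminCount (π : Equiv.Perm (Fin n)) : ℕ := (Finset.univ.filter (IsRmin π)).card

/-- number of inversions (i, j) with first coordinate i. -/
def invAt (π : Equiv.Perm (Fin n)) (i : Fin n) : ℕ :=
  (Finset.univ.filter (fun j : Fin n => i < j ∧ π j < π i)).card

/-- total number of inversions. -/
def inv (π : Equiv.Perm (Fin n)) : ℕ :=
  (Finset.univ.filter (fun p : Fin n × Fin n => p.1 < p.2 ∧ π p.2 < π p.1)).card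

def IsAscent (π : Equiv.Perm (Fin n)) (i : Fin n) : Prop :=
  ∃ h : (i : ℕ) + 1 < n, π i < π ⟨(i : ℕ) + 1, h⟩

def IsDescent (π : Equiv.Perm (Fin n)) (i : Fin n) : Prop :=
  ∃ h : (i : ℕ) + 1 < n, π ⟨(i : ℕ) + 1, h⟩ < π i

/-- number of descents, which is also the number of occurrences of [21]. -/
def des (π : Equiv.Perm (Fin n)) : ℕ := (Finset.univ.filter (IsDescent π)).card

/-- occurrences of the vincular pattern 2-[13]: (x, y, y+1), x < y, π y < π x < π (y+1). -/
def occ2_13 (π : Equiv.Perm (Fin n)) : ℕ :=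
  (Finset.univ.filter (fun p : Fin n × Fin n =>
    ∃ h : (p.2 : ℕ) + 1 < n, p.1 < p.2 ∧
      π p.2 < π p.1 ∧ π p.1 < π ⟨(p.2 : ℕ) + 1, h⟩)).card

/-- occurrences of [23]-1: (x, x+1, y), x+1 < y, π y < π x < π (x+1). -/
def occ23_1 (π : Equiv.Perm (Fin n)) : ℕ :=
  (Finset.univ.filter (fun p : Fin n × Fin n =>
    ∃ h : (p.1 : ℕ) + 1 < n, (⟨(p.1 : ℕ) + 1, h⟩ : Fin n) < p.2 ∧
      π p.2 < π p.1 ∧ π p.1 < π ⟨(p.1 : ℕ) + 1, h⟩)).card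

/-- occurrences of [13]-2: (x, x+1, y), x+1 < y, π x < π y < π (x+1). -/
def occ13_2 (π : Equiv.Perm (Fin n)) : ℕ :=
  (Finset.univ.filter (fun p : Fin n × Fin n =>
    ∃ h : (p.1 : ℕ) + 1 < n, (⟨(p.1 : ℕ) + 1, h⟩ : Fin n) < p.2 ∧
      π p.1 < π p.2 ∧ π p.2 < π ⟨(p.1 : ℕ) + 1, h⟩)).card

/-- occurrences of [21]-3: (x, x+1, y), x+1 < y, π (x+1) < π x < π y. -/
def occ21_3 (π : Equiv.Perm (Fin n)) : ℕ :=
  (Finset.univ.filter (fun p : Fin n × Fin n =>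
    ∃ h : (p.1 : ℕ) + 1 < n, (⟨(p.1 : ℕ) + 1, h⟩ : Fin n) < p.2 ∧
      π ⟨(p.1 : ℕ) + 1, h⟩ < π p.1 ∧ π p.1 < π p.2)).card

/-- occurrences of [32]-1: (x, x+1, y), x+1 < y, π y < π (x+1) < π x. -/
def occ32_1 (π : Equiv.Perm (Fin n)) : ℕ :=
  (Finset.univ.filter (fun p : Fin n × Fin n =>
    ∃ h : (p.1 : ℕ) + 1 < n, (⟨(p.1 : ℕ) + 1, h⟩ : Fin n) < p.2 ∧
      π p.2 < π ⟨(p.1 : ℕ) + 1, h⟩ ∧ π ⟨(p.1 : ℕ) + 1, h⟩ < π p.1)).card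

/-- occurrences of [31]-2: (x, x+1, y), x+1 < y, π (x+1) < π y < π x. -/
def occ31_2 (π : Equiv.Perm (Fin n)) : ℕ :=
  (Finset.univ.filter (fun p : Fin n × Fin n =>
    ∃ h : (p.1 : ℕ) + 1 < n, (⟨(p.1 : ℕ) + 1, h⟩ : Fin n) < p.2 ∧
      π ⟨(p.1 : ℕ) + 1, h⟩ < π p.2 ∧ π p.2 < π p.1)).card

/-- occurrences of 3-[21]: (y, x, x+1), y < x, π (x+1) < π x < π y. -/
def occ3_21 (π : Equiv.Perm (Fin n)) : ℕ :=
  (Finset.univ.filter (fun p : Fin n × Fin n =>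
    ∃ h : (p.2 : ℕ) + 1 < n, p.1 < p.2 ∧
      π ⟨(p.2 : ℕ) + 1, h⟩ < π p.2 ∧ π p.2 < π p.1)).card

/-- bast = [13]2 + [21]3 + [32]1 + [21]. -/
def bast (π : Equiv.Perm (Fin n)) : ℕ := occ13_2 π + occ21_3 π + occ32_1 π + des π

/-- foze = [21]3 + 3[21] + [13]2 + [21]. -/
def foze (π : Equiv.Perm (Fin n)) : ℕ := occ21_3 π + occ3_21 π + occ13_2 π + des π

/-- foze'' = [23]1 + [31]2 + [31]2 + [21]. -/
def fozePP (π : Equiv.Perm (Fin n)) : ℕ := occ23_1 π + occ31_2 π + occ31_2 π + des π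

/- ============ auxiliary material for stmt10 ============ -/

/-- total predecessor on Fin n (0 ↦ 0). -/
private def fpred {n : ℕ} (i : Fin n) : Fin n :=
  ⟨(i : ℕ) - 1, Nat.lt_of_le_of_lt (Nat.sub_le _ _) i.isLt⟩

private lemma fpred_val {n : ℕ} (i : Fin n) : ((fpred i : Fin n) : ℕ) = (i : ℕ) - 1 := rfl

private lemma avoid' {n : ℕ} {π : Equiv.Perm (Fin n)} (h : Avoids312 π) {i j k : Fin n}
    (h1 : i < j) (h2 : j < k) (h3 : π j < π k) (h4 : π k < π i) : False :=
  h ⟨i, j, k, h1, h2, h3, h4⟩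

/-- there is a left-to-right maximum below y whose value dominates π x, for any x < y. -/
private lemma exists_lmax_ge {n : ℕ} (π : Equiv.Perm (Fin n)) (y x : Fin n) (hxy : x < y) :
    ∃ m : Fin n, IsLmax π m ∧ m < y ∧ π x ≤ π m := by
  obtain ⟨m, hm, hmax⟩ := Finset.exists_max_image
    (Finset.univ.filter fun j : Fin n => j < y) (fun j => π j) ⟨x, by simp [hxy]⟩
  simp only [Finset.mem_filter, Finset.mem_univ, true_and] at hm hmax
  refine ⟨m, ?_, hm, hmax x hxy⟩
  intro k hk
  have hky : k < y := lt_trans hk hm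
  rcases lt_or_eq_of_le (hmax k hky) with h' | h'
  · exact h'
  · exact absurd (π.injective h') (ne_of_lt hk)

private lemma lmax_card {n : ℕ} (π : Equiv.Perm (Fin n)) (i : Fin n) (hi : IsLmax π i) :
    (Finset.univ.filter fun j : Fin n => i < j ∧ π j < π i).card = (π i : ℕ) - (i : ℕ) := by
  have hT : (Finset.univ.filter fun j : Fin n => π j < π i).card = (π i : ℕ) := by
    have he : (Finset.univ.filter fun j : Fin n => π j < π i)
        = (Finset.Iio (π i)).map π.symm.toEmbedding := by
      ext j
      simp [Equiv.symm_apply_eq, eq_comm]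
    rw [he, Finset.card_map, Fin.card_Iio]
  have h1 : (Finset.univ.filter fun j : Fin n => j < i).card = (i : ℕ) := by
    have he : (Finset.univ.filter fun j : Fin n => j < i) = Finset.Iio i := by ext j; simp
    rw [he, Fin.card_Iio]
  have hsplit : (Finset.univ.filter fun j : Fin n => π j < π i)
      = (Finset.univ.filter fun j : Fin n => j < i)
        ∪ (Finset.univ.filter fun j : Fin n => i < j ∧ π j < π i) := by
    ext j
    simp only [Finset.mem_filter, Finset.mem_univ, true_and, Finset.mem_union]
    constructor
    · intro hj
      rcases lt_trichotomy j i with h' | h' | h'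
      · exact Or.inl h'
      · exact absurd (h' ▸ hj) (lt_irrefl _)
      · exact Or.inr ⟨h', hj⟩
    · rintro (h' | ⟨_, h'⟩)
      · exact hi j h'
      · exact h'
  have hdisj : Disjoint (Finset.univ.filter fun j : Fin n => j < i)
      (Finset.univ.filter fun j : Fin n => i < j ∧ π j < π i) := by
    rw [Finset.disjoint_left]
    intro a ha hb
    simp only [Finset.mem_filter, Finset.mem_univ, true_and] at ha hb
    exact absurd (lt_trans ha hb.1) (lt_irrefl a)
  have := hT
  rw [hsplit, Finset.card_union_of_disjoint hdisj, h1] at this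
  omega

private lemma sum_lmax {n : ℕ} (π : Equiv.Perm (Fin n)) :
    ∑ i ∈ LmaxSet π, ((π i : ℕ) - (i : ℕ)) =
      (Finset.univ.filter fun p : Fin n × Fin n =>
        IsLmax π p.1 ∧ p.1 < p.2 ∧ π p.2 < π p.1).card := by
  rw [Finset.card_eq_sum_card_fiberwise
    (f := Prod.fst) (t := (Finset.univ : Finset (Fin n))) (fun x _ => Finset.mem_univ _)]
  have hfib : ∀ i : Fin n,
      ((Finset.univ.filter fun p : Fin n × Fin n =>
        IsLmax π p.1 ∧ p.1 < p.2 ∧ π p.2 < π p.1).filter fun p => p.1 = i).card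
      = if IsLmax π i then
          (Finset.univ.filter fun j : Fin n => i < j ∧ π j < π i).card else 0 := by
    intro i
    by_cases hi : IsLmax π i
    · rw [if_pos hi]
      apply Finset.card_bij (fun p _ => p.2)
      · intro p hp
        simp only [Finset.mem_filter, Finset.mem_univ, true_and] at hp ⊢
        obtain ⟨⟨_, h2, h3⟩, h4⟩ := hp
        exact ⟨h4 ▸ h2, h4 ▸ h3⟩
      · intro p hp q hq hpq
        simp only [Finset.mem_filter, Finset.mem_univ, true_and] at hp hq
        exact Prod.ext (hp.2.trans hq.2.symm) hpq
      · intro j hj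
        simp only [Finset.mem_filter, Finset.mem_univ, true_and] at hj
        exact ⟨(i, j), by simp [hi, hj.1, hj.2], rfl⟩
    · rw [if_neg hi, Finset.card_eq_zero]
      ext p
      simp only [Finset.mem_filter, Finset.mem_univ, true_and, Finset.notMem_empty, iff_false]
      rintro ⟨⟨h1, -, -⟩, h4⟩
      exact hi (h4 ▸ h1)
  rw [Finset.sum_congr rfl fun i _ => hfib i]
  rw [Finset.sum_ite, Finset.sum_const, smul_zero, add_zero]
  have : Finset.univ.filter (fun i : Fin n => IsLmax π i) = LmaxSet π := rfl
  rw [this]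
  exact (Finset.sum_congr rfl fun i hi => (lmax_card π i (by
    simpa [LmaxSet] using hi))).symm

private lemma des_card {n : ℕ} (π : Equiv.Perm (Fin n)) :
    (Finset.univ.filter fun p : Fin n × Fin n =>
      (p.2 : ℕ) = (p.1 : ℕ) + 1 ∧ π p.2 < π p.1).card = des π := by
  apply Finset.card_bij (fun p _ => p.1)
  · intro p hp
    simp only [Finset.mem_filter, Finset.mem_univ, true_and] at hp
    obtain ⟨h1, h2⟩ := hp
    simp only [des, Finset.mem_filter, Finset.mem_univ, true_and]
    have hlt : (p.1 : ℕ) + 1 < n := h1 ▸ p.2.isLt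
    refine ⟨hlt, ?_⟩
    have he : (⟨(p.1 : ℕ) + 1, hlt⟩ : Fin n) = p.2 := Fin.ext h1.symm
    rw [he]; exact h2
  · intro p hp q hq hpq
    simp only [Finset.mem_filter, Finset.mem_univ, true_and] at hp hq
    refine Prod.ext hpq (Fin.ext ?_)
    rw [hp.1, hq.1, hpq]
  · intro x hx
    simp only [des, Finset.mem_filter, Finset.mem_univ, true_and] at hx
    obtain ⟨hlt, hd⟩ := hx
    exact ⟨(x, ⟨(x : ℕ) + 1, hlt⟩), by simp [hd], rfl⟩

/-- for 312-avoiding π, foze''(π) (= number of [23]1-occurrences plus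
number of descents) equals Σ_{i ∈ Lmax(π)} (π_i - i). -/
theorem stmt10 {n : ℕ} (π : Equiv.Perm (Fin n)) (h : Avoids312 π) :
    occ23_1 π + des π = ∑ i ∈ LmaxSet π, ((π i : ℕ) - (i : ℕ)) := by
  classical
  set O := (Finset.univ.filter (fun p : Fin n × Fin n =>
    ∃ hh : (p.1 : ℕ) + 1 < n, (⟨(p.1 : ℕ) + 1, hh⟩ : Fin n) < p.2 ∧
      π p.2 < π p.1 ∧ π p.1 < π ⟨(p.1 : ℕ) + 1, hh⟩)) with hOdef
  set D := (Finset.univ.filter fun p : Fin n × Fin n =>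
    (p.2 : ℕ) = (p.1 : ℕ) + 1 ∧ π p.2 < π p.1) with hDdef
  set R := (Finset.univ.filter fun p : Fin n × Fin n =>
    IsLmax π p.1 ∧ p.1 < p.2 ∧ π p.2 < π p.1) with hRdef
  have hdisj : Disjoint O D := by
    rw [Finset.disjoint_left]
    intro p hp hq
    simp only [hOdef, hDdef, Finset.mem_filter, Finset.mem_univ, true_and] at hp hq
    obtain ⟨hh, hlt, -, -⟩ := hp
    have h1 : (p.1 : ℕ) + 1 < (p.2 : ℕ) := hlt
    omega
  have hmain : R.card = (O ∪ D).card := by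
    apply Finset.card_bij (fun p _ =>
      if 1 ≤ (p.1 : ℕ) ∧ π p.2 < π (fpred p.1) then ((fpred p.1, p.2) : Fin n × Fin n)
      else (fpred p.2, p.2))
    · -- maps into O ∪ D
      intro p hp
      simp only [hRdef, Finset.mem_filter, Finset.mem_univ, true_and] at hp
      obtain ⟨hLm, hij, hinv⟩ := hp
      have hij' : (p.1 : ℕ) < (p.2 : ℕ) := hij
      by_cases hc : 1 ≤ (p.1 : ℕ) ∧ π p.2 < π (fpred p.1)
      · rw [if_pos hc]
        apply Finset.mem_union_left
        simp only [hOdef, Finset.mem_filter, Finset.mem_univ, true_and]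
        have h1 : ((fpred p.1 : Fin n) : ℕ) + 1 = (p.1 : ℕ) := by
          rw [fpred_val]; omega
        have hlt : ((fpred p.1 : Fin n) : ℕ) + 1 < n := h1 ▸ p.1.isLt
        have heq : (⟨((fpred p.1 : Fin n) : ℕ) + 1, hlt⟩ : Fin n) = p.1 := Fin.ext h1
        refine ⟨hlt, ?_, hc.2, ?_⟩
        · rw [heq]; exact hij
        · rw [heq]
          exact hLm (fpred p.1) (show ((fpred p.1 : Fin n) : ℕ) < (p.1 : ℕ) by
            rw [fpred_val]; omega)
      · rw [if_neg hc]
        apply Finset.mem_union_right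
        simp only [hDdef, Finset.mem_filter, Finset.mem_univ, true_and]
        have h1 : 1 ≤ (p.2 : ℕ) := by omega
        refine ⟨by rw [fpred_val]; omega, ?_⟩
        rcases Nat.lt_or_ge (p.1 : ℕ) ((p.2 : ℕ) - 1) with hca | hca
        · by_contra hle
          have hne : fpred p.2 ≠ p.2 := by
            simp only [Ne, Fin.ext_iff, fpred_val]; omega
          have hlt2 : π (fpred p.2) < π p.2 :=
            lt_of_le_of_ne (le_of_not_gt hle) (fun e => hne (π.injective e))
          exact avoid' h (show p.1 < fpred p.2 from show (p.1:ℕ) < (fpred p.2 : ℕ) by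
              rw [fpred_val]; omega)
            (show fpred p.2 < p.2 from show ((fpred p.2 : Fin n):ℕ) < (p.2:ℕ) by
              rw [fpred_val]; omega) hlt2 hinv
        · have he : fpred p.2 = p.1 := Fin.ext (by rw [fpred_val]; omega)
          rw [he]; exact hinv
    · -- injective
      intro p hp q hq hpq
      simp only [hRdef, Finset.mem_filter, Finset.mem_univ, true_and] at hp hq
      obtain ⟨hpL, hpij, hpinv⟩ := hp
      obtain ⟨hqL, hqij, hqinv⟩ := hq
      have hpij' : (p.1 : ℕ) < (p.2 : ℕ) := hpij
      have hqij' : (q.1 : ℕ) < (q.2 : ℕ) := hqij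
      have h2 : p.2 = q.2 := by
        have e1 : (if 1 ≤ (p.1 : ℕ) ∧ π p.2 < π (fpred p.1)
            then ((fpred p.1, p.2) : Fin n × Fin n) else (fpred p.2, p.2)).2 = p.2 := by
          split_ifs <;> rfl
        have e2 : (if 1 ≤ (q.1 : ℕ) ∧ π q.2 < π (fpred q.1)
            then ((fpred q.1, q.2) : Fin n × Fin n) else (fpred q.2, q.2)).2 = q.2 := by
          split_ifs <;> rfl
        rw [← e1, ← e2, hpq]
      have hfst := congrArg Prod.fst hpq
      by_cases hc1 : 1 ≤ (p.1 : ℕ) ∧ π p.2 < π (fpred p.1) <;>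
        by_cases hc2 : 1 ≤ (q.1 : ℕ) ∧ π q.2 < π (fpred q.1)
      · rw [if_pos hc1, if_pos hc2] at hfst
        have hv : fpred p.1 = fpred q.1 := hfst
        have : ((fpred p.1 : Fin n) : ℕ) = ((fpred q.1 : Fin n) : ℕ) := congrArg Fin.val hv
        rw [fpred_val, fpred_val] at this
        exact Prod.ext (Fin.ext (by omega)) h2
      · rw [if_pos hc1, if_neg hc2] at hfst
        have hv : fpred p.1 = fpred q.2 := hfst
        have : ((fpred p.1 : Fin n) : ℕ) = ((fpred q.2 : Fin n) : ℕ) := congrArg Fin.val hv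
        rw [fpred_val, fpred_val] at this
        have h22 : (p.2 : ℕ) = (q.2 : ℕ) := by rw [h2]
        omega
      · rw [if_neg hc1, if_pos hc2] at hfst
        have hv : fpred p.2 = fpred q.1 := hfst
        have : ((fpred p.2 : Fin n) : ℕ) = ((fpred q.1 : Fin n) : ℕ) := congrArg Fin.val hv
        rw [fpred_val, fpred_val] at this
        have h22 : (p.2 : ℕ) = (q.2 : ℕ) := by rw [h2]
        omega
      · -- both descent-type: uniqueness of the minimal inverting lmax
        rw [if_neg hc1, if_neg hc2] at hfst
        rw [← h2] at hqij hqinv hc2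
        refine Prod.ext ?_ h2
        have key : ∀ a b j : Fin n, IsLmax π a → a < j → π j < π a →
            a < b → b < j → ¬ (1 ≤ (b : ℕ) ∧ π j < π (fpred b)) → π j < π b → False := by
          intro a b j haL haj hainv hab hbj hcb hbinv
          have hab' : (a : ℕ) < (b : ℕ) := hab
          have hbj' : (b : ℕ) < (j : ℕ) := hbj
          have h1b : 1 ≤ (b : ℕ) := by omega
          have hle : ¬ π j < π (fpred b) := fun hh => hcb ⟨h1b, hh⟩
          rcases Nat.lt_or_ge (a : ℕ) ((b : ℕ) - 1) with hca | hca
          · have hne : fpred b ≠ j := by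
              simp only [Ne, Fin.ext_iff, fpred_val]; omega
            have hlt2 : π (fpred b) < π j :=
              lt_of_le_of_ne (le_of_not_gt hle) (fun e => hne (π.injective e))
            exact avoid' h (show a < fpred b from show (a:ℕ) < ((fpred b : Fin n):ℕ) by
                rw [fpred_val]; omega)
              (show fpred b < j from show ((fpred b : Fin n):ℕ) < (j:ℕ) by
                rw [fpred_val]; omega) hlt2 hainv
          · have he : fpred b = a := Fin.ext (by rw [fpred_val]; omega)
            rw [he] at hle
            exact hle hainv
        rcases lt_trichotomy p.1 q.1 with hlt | heq | hlt
        · exact absurd (key p.1 q.1 p.2 hpL hpij hpinv hlt hqij hc2 hqinv) id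
        · exact heq
        · exact absurd (key q.1 p.1 p.2 hqL hqij hqinv hlt hpij hc1 hpinv) id
    · -- surjective
      intro q hq
      rcases Finset.mem_union.mp hq with hqO | hqD
      · simp only [hOdef, Finset.mem_filter, Finset.mem_univ, true_and] at hqO
        obtain ⟨hh, hlt, hinv, hasc⟩ := hqO
        set i : Fin n := ⟨(q.1 : ℕ) + 1, hh⟩ with hidef
        have hiL : IsLmax π i := by
          intro k hk
          have hk' : (k : ℕ) < (q.1 : ℕ) + 1 := hk
          rcases Nat.lt_or_ge (k : ℕ) (q.1 : ℕ) with hkx | hkx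
          · by_contra hcon
            have hne : k ≠ i := ne_of_lt hk
            have : π i < π k :=
              lt_of_le_of_ne (le_of_not_gt hcon) (fun e => hne (π.injective e.symm))
            exact avoid' h (show k < q.1 from hkx) (show q.1 < i from Nat.lt_succ_self _)
              hasc this
          · have : k = q.1 := Fin.ext (by omega)
            rw [this]; exact hasc
        have hmem : (i, q.2) ∈ R := by
          simp only [hRdef, Finset.mem_filter, Finset.mem_univ, true_and]
          exact ⟨hiL, hlt, lt_trans hinv hasc⟩
        refine ⟨(i, q.2), hmem, ?_⟩
        have hfp : fpred i = q.1 := Fin.ext (by rw [fpred_val]; simp [hidef])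
        have hc : 1 ≤ (i : ℕ) ∧ π q.2 < π (fpred i) := by
          constructor
          · simp [hidef]
          · rw [hfp]; exact hinv
        rw [if_pos hc, hfp]
      · simp only [hDdef, Finset.mem_filter, Finset.mem_univ, true_and] at hqD
        obtain ⟨hval, hdes⟩ := hqD
        have hq12 : q.1 < q.2 := show (q.1 : ℕ) < (q.2 : ℕ) by omega
        set A := (Finset.univ.filter fun i : Fin n =>
          IsLmax π i ∧ i < q.2 ∧ π q.2 < π i) with hAdef
        have hAne : A.Nonempty := by
          obtain ⟨m, hmL, hmy, hmge⟩ := exists_lmax_ge π q.2 q.1 hq12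
          refine ⟨m, ?_⟩
          simp only [hAdef, Finset.mem_filter, Finset.mem_univ, true_and]
          exact ⟨hmL, hmy, lt_of_lt_of_le hdes hmge⟩
        set i := A.min' hAne with hi
        have himem := A.min'_mem hAne
        simp only [hAdef, Finset.mem_filter, Finset.mem_univ, true_and] at himem
        obtain ⟨hiL, hiy, hiv⟩ := himem
        have hmem : (i, q.2) ∈ R := by
          simp only [hRdef, Finset.mem_filter, Finset.mem_univ, true_and]
          exact ⟨hiL, hiy, hiv⟩
        refine ⟨(i, q.2), hmem, ?_⟩
        have hc : ¬ (1 ≤ (i : ℕ) ∧ π q.2 < π (fpred i)) := by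
          rintro ⟨h1, h2'⟩
          have hfpi : fpred i < i := show ((fpred i : Fin n) : ℕ) < (i : ℕ) by
            rw [fpred_val]; omega
          obtain ⟨m, hmL, hmi, hmge⟩ := exists_lmax_ge π i (fpred i) hfpi
          have hmA : m ∈ A := by
            simp only [hAdef, Finset.mem_filter, Finset.mem_univ, true_and]
            exact ⟨hmL, lt_trans hmi hiy, lt_of_lt_of_le h2' hmge⟩
          have := A.min'_le m hmA
          exact absurd (lt_of_lt_of_le hmi this) (lt_irrefl _)
        rw [if_neg hc]
        have hfp : fpred q.2 = q.1 := Fin.ext (by rw [fpred_val]; omega)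
        rw [hfp]
  have hocc : occ23_1 π = O.card := rfl
  have hdes : des π = D.card := (des_card π).symm
  have hsum := sum_lmax π
  rw [Finset.card_union_of_disjoint hdisj] at hmain
  rw [hocc, hdes, hsum, ← hRdef]
  omega


end
end ThesisStmt
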